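/- The SimRank recursion on a finite graph has a unique solution S with all entries in [0,1]. -/

import Mathlib

open Matrix BigOperators Finset

variable {V : Type*} [Fintype V] [DecidableEq V]

/-- Random-walk transition matrix `P = D⁻¹ A`. -/
noncomputable def walkP (G : SimpleGraph V) [DecidableRel G.Adj] : Matrix V V ℝ :=
  fun u v => if G.Adj u v then (1 : ℝ) / (G.degree u) else 0

/-- `S` satisfies the SimRank recursion with decay `c`. -/
def IsSimRank (G : SimpleGraph V) [DecidableRel G.Adj] (c : ℝ) (S : Matrix V V ℝ) : Prop :=
  (∀ u, S u u = 1) ∧ ∀ u v, u ≠ v → S u v =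
    c / ((G.degree u : ℝ) * (G.degree v : ℝ)) *
      ∑ u' ∈ G.neighborFinset u, ∑ v' ∈ G.neighborFinset v, S u' v'

/-- The SimRank iteration map. -/
noncomputable def simT (G : SimpleGraph V) [DecidableRel G.Adj] (c : ℝ)
    (S : V → V → ℝ) : V → V → ℝ :=
  fun u v => if u = v then 1 else
    c / ((G.degree u : ℝ) * (G.degree v : ℝ)) *
      ∑ u' ∈ G.neighborFinset u, ∑ v' ∈ G.neighborFinset v, S u' v'

lemma isSimRank_iff_fixed (G : SimpleGraph V) [DecidableRel G.Adj] (c : ℝ)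
    (S : Matrix V V ℝ) : IsSimRank G c S ↔ simT G c S = S := by
  constructor
  · rintro ⟨h1, h2⟩
    funext u v
    by_cases h : u = v
    · subst h; simp [simT, h1]
    · simp only [simT, if_neg h]; exact (h2 u v h).symm
  · intro h
    constructor
    · intro u
      have := congrFun (congrFun h u) u
      simpa [simT] using this.symm
    · intro u v huv
      have := congrFun (congrFun h u) v
      simp only [simT, if_neg huv] at this
      exact this.symm

lemma simT_contracting (G : SimpleGraph V) [DecidableRel G.Adj]
    (hdeg : ∀ v : V, 0 < G.degree v) (c : ℝ) (hc : c ∈ Set.Ioo (0:ℝ) 1) :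
    ContractingWith c.toNNReal (simT G c) := by
  obtain ⟨hc0, hc1⟩ := hc
  constructor
  · rw [← NNReal.coe_lt_one, Real.coe_toNNReal _ hc0.le]; exact hc1
  · apply LipschitzWith.of_dist_le_mul
    intro S S'
    have hcd : (c.toNNReal : ℝ) = c := Real.coe_toNNReal _ hc0.le
    have hdnn : 0 ≤ dist S S' := dist_nonneg
    have hbnd : (0:ℝ) ≤ c * dist S S' := mul_nonneg hc0.le hdnn
    rw [dist_pi_le_iff (by rw [hcd]; exact hbnd)]
    intro u
    rw [dist_pi_le_iff (by rw [hcd]; exact hbnd)]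
    intro v
    rw [hcd]
    by_cases h : u = v
    · simp [simT, h, hbnd]
    · have hdu : (0:ℝ) < (G.degree u : ℝ) := by exact_mod_cast hdeg u
      have hdv : (0:ℝ) < (G.degree v : ℝ) := by exact_mod_cast hdeg v
      simp only [simT, if_neg h, Real.dist_eq]
      rw [← mul_sub, ← Finset.sum_sub_distrib]
      simp_rw [← Finset.sum_sub_distrib]
      rw [abs_mul, abs_of_nonneg (by positivity : (0:ℝ) ≤ c / ((G.degree u : ℝ) * (G.degree v : ℝ)))]
      have hsum : |∑ u' ∈ G.neighborFinset u, ∑ v' ∈ G.neighborFinset v,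
          (S u' v' - S' u' v')| ≤ (G.degree u : ℝ) * (G.degree v : ℝ) * dist S S' := by
        calc |∑ u' ∈ G.neighborFinset u, ∑ v' ∈ G.neighborFinset v, (S u' v' - S' u' v')|
            ≤ ∑ u' ∈ G.neighborFinset u, ∑ v' ∈ G.neighborFinset v, |S u' v' - S' u' v'| := by
              refine (Finset.abs_sum_le_sum_abs _ _).trans ?_
              exact Finset.sum_le_sum fun i _ => Finset.abs_sum_le_sum_abs _ _
          _ ≤ ∑ u' ∈ G.neighborFinset u, ∑ v' ∈ G.neighborFinset v, dist S S' := by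
              refine Finset.sum_le_sum fun i _ => Finset.sum_le_sum fun j _ => ?_
              calc |S i j - S' i j| = dist (S i j) (S' i j) := (Real.dist_eq _ _).symm
                _ ≤ dist (S i) (S' i) := dist_le_pi_dist _ _ _
                _ ≤ dist S S' := dist_le_pi_dist _ _ _
          _ = (G.degree u : ℝ) * (G.degree v : ℝ) * dist S S' := by
              simp [Finset.sum_const, SimpleGraph.card_neighborFinset_eq_degree, mul_assoc]
      calc c / ((G.degree u : ℝ) * (G.degree v : ℝ)) *
            |∑ u' ∈ G.neighborFinset u, ∑ v' ∈ G.neighborFinset v, (S u' v' - S' u' v')|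
          ≤ c / ((G.degree u : ℝ) * (G.degree v : ℝ)) *
            ((G.degree u : ℝ) * (G.degree v : ℝ) * dist S S') := by
            exact mul_le_mul_of_nonneg_left hsum (by positivity)
        _ = c * dist S S' := by field_simp

lemma simT_mem_Icc (G : SimpleGraph V) [DecidableRel G.Adj]
    (hdeg : ∀ v : V, 0 < G.degree v) (c : ℝ) (hc : c ∈ Set.Ioo (0:ℝ) 1)
    (S : V → V → ℝ) (hS : ∀ u v, S u v ∈ Set.Icc (0:ℝ) 1) :
    ∀ u v, simT G c S u v ∈ Set.Icc (0:ℝ) 1 := by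
  obtain ⟨hc0, hc1⟩ := hc
  intro u v
  by_cases h : u = v
  · simp [simT, h]
  · have hdu : (0:ℝ) < (G.degree u : ℝ) := by exact_mod_cast hdeg u
    have hdv : (0:ℝ) < (G.degree v : ℝ) := by exact_mod_cast hdeg v
    simp only [simT, if_neg h]
    constructor
    · apply mul_nonneg (by positivity)
      exact Finset.sum_nonneg fun i _ => Finset.sum_nonneg fun j _ => (hS i j).1
    · have hsum : ∑ u' ∈ G.neighborFinset u, ∑ v' ∈ G.neighborFinset v, S u' v'
          ≤ (G.degree u : ℝ) * (G.degree v : ℝ) := by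
        calc ∑ u' ∈ G.neighborFinset u, ∑ v' ∈ G.neighborFinset v, S u' v'
            ≤ ∑ u' ∈ G.neighborFinset u, ∑ v' ∈ G.neighborFinset v, (1:ℝ) :=
              Finset.sum_le_sum fun i _ => Finset.sum_le_sum fun j _ => (hS i j).2
          _ = (G.degree u : ℝ) * (G.degree v : ℝ) := by
              simp [SimpleGraph.card_neighborFinset_eq_degree]
      calc c / ((G.degree u : ℝ) * (G.degree v : ℝ)) *
            ∑ u' ∈ G.neighborFinset u, ∑ v' ∈ G.neighborFinset v, S u' v'
          ≤ c / ((G.degree u : ℝ) * (G.degree v : ℝ)) *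
            ((G.degree u : ℝ) * (G.degree v : ℝ)) :=
            mul_le_mul_of_nonneg_left hsum (by positivity)
        _ = c := by field_simp
        _ ≤ 1 := hc1.le

theorem stmt2 (G : SimpleGraph V) [DecidableRel G.Adj]
    (hdeg : ∀ v : V, 0 < G.degree v) (c : ℝ) (hc : c ∈ Set.Ioo (0:ℝ) 1) :
    (∃! S : Matrix V V ℝ, IsSimRank G c S) ∧
    ∀ S : Matrix V V ℝ, IsSimRank G c S → ∀ u v, S u v ∈ Set.Icc (0:ℝ) 1 := by
  have hK := simT_contracting G hdeg c hc
  set F : Matrix V V ℝ := hK.fixedPoint with hF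
  have hfix : simT G c F = F := hK.fixedPoint_isFixedPt
  have huniq : ∀ S : Matrix V V ℝ, IsSimRank G c S → S = F := by
    intro S hS
    exact hK.fixedPoint_unique ((isSimRank_iff_fixed G c S).1 hS)
  have hFmem : ∀ u v, F u v ∈ Set.Icc (0:ℝ) 1 := by
    set x₀ : V → V → ℝ := fun _ _ => (0:ℝ) with hx₀
    have hiter : ∀ n u v, (simT G c)^[n] x₀ u v ∈ Set.Icc (0:ℝ) 1 := by
      intro n
      induction n with
      | zero => intro u v; simp [hx₀]
      | succ n ih =>
          intro u v
          rw [Function.iterate_succ_apply']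
          exact simT_mem_Icc G hdeg c hc _ ih u v
    have htend := hK.tendsto_iterate_fixedPoint x₀
    intro u v
    have h1 : Filter.Tendsto (fun n => (simT G c)^[n] x₀ u v) Filter.atTop (nhds (F u v)) := by
      have := tendsto_pi_nhds.1 htend u
      exact tendsto_pi_nhds.1 this v
    constructor
    · exact ge_of_tendsto h1 (Filter.Eventually.of_forall fun n => (hiter n u v).1)
    · exact le_of_tendsto h1 (Filter.Eventually.of_forall fun n => (hiter n u v).2)
  refine ⟨⟨F, (isSimRank_iff_fixed G c F).2 hfix, huniq⟩, ?_⟩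
  intro S hS u v
  rw [huniq S hS]
  exact hFmem u v
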